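/- (Reflection principle for ladder chains.) For every k ≥ 3 and every integer x with L+1 ≤ x ≤ U−3 (where U−L ≥ 4), P(B_k^x | L_k ≥ 3) = P(B_{k−1}^{x+2} | ξ_1 = 1), where L_k denotes the least index l ∈ {1,…,k} with ξ_l = −1, with L_k = k+1 if ξ_l = 1 for all l ≤ k. -/

import Mathlib

set_option linter.unusedSectionVars false
set_option linter.unusedVariables false
set_option maxHeartbeats 1000000

open MeasureTheory ProbabilityTheory Filter
open scoped ENNReal Classical

noncomputable section

variable {Ω : Type*} [MeasurableSpace Ω]

/-- The `k`-th step of the ladder chain `L(2,2,p)` built from the driving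
sequence `ξ` (indexed from 1): `X₁ = ±1` according to `ξ₁`, and for `k ≥ 2`,
`X_k = -1` if `ξ_k = -1`, `X_k = 2` if `ξ_k = ξ_{k-1} = 1`, and `X_k = 1`
if `ξ_k = 1, ξ_{k-1} = -1`. -/
def ladderX (ξ : ℕ → Ω → ℤ) (k : ℕ) (ω : Ω) : ℤ :=
  if k = 1 then (if ξ 1 ω = 1 then 1 else -1)
  else if ξ k ω = -1 then -1
  else if ξ (k - 1) ω = 1 then 2 else 1

/-- The ladder chain `S_n = X₁ + ⋯ + X_n` (with `S_0 = 0`). -/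
def ladderS (ξ : ℕ → Ω → ℤ) (n : ℕ) (ω : Ω) : ℤ :=
  ∑ k ∈ Finset.Icc 1 n, ladderX ξ k ω

/-- The truncated exit time `τ_k^x`: the least `l ≤ k` with `S_l^x ≤ L` or
`S_l^x ≥ U`, and `k` if there is no such `l`. -/
def ladderTau (ξ : ℕ → Ω → ℤ) (L U x : ℤ) (k : ℕ) (ω : Ω) : ℕ :=
  if ∃ l ≤ k, (x + ladderS ξ l ω ≤ L ∨ U ≤ x + ladderS ξ l ω)
  then sInf {l | l ≤ k ∧ (x + ladderS ξ l ω ≤ L ∨ U ≤ x + ladderS ξ l ω)}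
  else k

/-- The event `A_k^x`: the walk started at `x` exits through the lower
barrier `L` within the first `k` steps. -/
def ladderA (ξ : ℕ → Ω → ℤ) (L U x : ℤ) (k : ℕ) : Set Ω :=
  ⋃ l ∈ Finset.range (k + 1),
    {ω | ladderTau ξ L U x k ω = l ∧ x + ladderS ξ l ω ≤ L}

/-- The event `B_k^x`: the walk started at `x` exits through the upper
barrier `U` within the first `k` steps. -/
def ladderB (ξ : ℕ → Ω → ℤ) (L U x : ℤ) (k : ℕ) : Set Ω :=
  ⋃ l ∈ Finset.range (k + 1),
    {ω | ladderTau ξ L U x k ω = l ∧ U ≤ x + ladderS ξ l ω}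

/-- `L_k`: the least index `l ∈ {1, …, k}` with `ξ_l = -1`, and `k + 1` if
`ξ_l = 1` for all `l ≤ k`. -/
def ladderLk (ξ : ℕ → Ω → ℤ) (k : ℕ) (ω : Ω) : ℕ :=
  if ∃ l, 1 ≤ l ∧ l ≤ k ∧ ξ l ω = -1
  then sInf {l | 1 ≤ l ∧ l ≤ k ∧ ξ l ω = -1}
  else k + 1

-- basic lemmas
lemma ladderS_zero (ξ : ℕ → Ω → ℤ) (ω : Ω) : ladderS ξ 0 ω = 0 := by
  simp [ladderS]

lemma ladderS_succ (ξ : ℕ → Ω → ℤ) (n : ℕ) (ω : Ω) :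
    ladderS ξ (n + 1) ω = ladderS ξ n ω + ladderX ξ (n + 1) ω := by
  rw [ladderS, ladderS, Finset.sum_Icc_succ_top (by omega)]

lemma ladderTau_le (ξ : ℕ → Ω → ℤ) (L U x : ℤ) (k : ℕ) (ω : Ω) :
    ladderTau ξ L U x k ω ≤ k := by
  rw [ladderTau]
  split
  · next h =>
    obtain ⟨l, hl, hc⟩ := h
    exact le_trans (Nat.sInf_le ⟨hl, hc⟩) hl
  · exact le_refl _

lemma mem_ladderB_iff (ξ : ℕ → Ω → ℤ) (L U x : ℤ) (k : ℕ) (ω : Ω) :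
    ω ∈ ladderB ξ L U x k ↔ U ≤ x + ladderS ξ (ladderTau ξ L U x k ω) ω := by
  constructor
  · intro h
    simp only [ladderB, Set.mem_iUnion, Finset.mem_range, Set.mem_setOf_eq] at h
    obtain ⟨l, _, hτ, hU⟩ := h
    rwa [hτ]
  · intro h
    simp only [ladderB, Set.mem_iUnion, Finset.mem_range, Set.mem_setOf_eq]
    exact ⟨ladderTau ξ L U x k ω, by have := ladderTau_le ξ L U x k ω; omega, rfl, h⟩

section Congr

variable {Ω' : Type*} [MeasurableSpace Ω']

lemma ladderX_congr {ξ : ℕ → Ω → ℤ} {η : ℕ → Ω' → ℤ} {ω : Ω} {ω' : Ω'} {m : ℕ}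
    (h : ∀ n, 1 ≤ n → n ≤ m → ξ n ω = η n ω') {j : ℕ} (hj1 : 1 ≤ j) (hjm : j ≤ m) :
    ladderX ξ j ω = ladderX η j ω' := by
  rcases eq_or_ne j 1 with rfl | hne
  · simp [ladderX, h 1 le_rfl hjm]
  · simp only [ladderX, if_neg hne, h j hj1 hjm, h (j - 1) (by omega) (by omega)]

lemma ladderS_congr {ξ : ℕ → Ω → ℤ} {η : ℕ → Ω' → ℤ} {ω : Ω} {ω' : Ω'} {m : ℕ}
    (h : ∀ n, 1 ≤ n → n ≤ m → ξ n ω = η n ω') {l : ℕ} (hl : l ≤ m) :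
    ladderS ξ l ω = ladderS η l ω' := by
  refine Finset.sum_congr rfl fun j hj => ?_
  rw [Finset.mem_Icc] at hj
  exact ladderX_congr h hj.1 (by omega)

lemma ladderTau_congr {ξ : ℕ → Ω → ℤ} {η : ℕ → Ω' → ℤ} {ω : Ω} {ω' : Ω'} {m : ℕ}
    (h : ∀ n, 1 ≤ n → n ≤ m → ξ n ω = η n ω') {L U x : ℤ} {k : ℕ} (hk : k ≤ m) :
    ladderTau ξ L U x k ω = ladderTau η L U x k ω' := by
  have hS : ∀ l ≤ k, ladderS ξ l ω = ladderS η l ω' :=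
    fun l hl => ladderS_congr h (by omega)
  have hset : {l | l ≤ k ∧ (x + ladderS ξ l ω ≤ L ∨ U ≤ x + ladderS ξ l ω)}
      = {l | l ≤ k ∧ (x + ladderS η l ω' ≤ L ∨ U ≤ x + ladderS η l ω')} := by
    ext l
    simp only [Set.mem_setOf_eq]
    constructor
    · rintro ⟨h1, h2⟩; exact ⟨h1, by rwa [hS l h1] at h2⟩
    · rintro ⟨h1, h2⟩; exact ⟨h1, by rwa [← hS l h1] at h2⟩
  have hex : (∃ l ≤ k, (x + ladderS ξ l ω ≤ L ∨ U ≤ x + ladderS ξ l ω))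
      ↔ (∃ l ≤ k, (x + ladderS η l ω' ≤ L ∨ U ≤ x + ladderS η l ω')) := by
    constructor
    · rintro ⟨l, h1, h2⟩; exact ⟨l, h1, by rwa [hS l h1] at h2⟩
    · rintro ⟨l, h1, h2⟩; exact ⟨l, h1, by rwa [← hS l h1] at h2⟩
  rw [ladderTau, ladderTau, hset, if_congr hex rfl rfl]

lemma ladderB_congr {ξ : ℕ → Ω → ℤ} {η : ℕ → Ω' → ℤ} {ω : Ω} {ω' : Ω'} {m : ℕ}
    (h : ∀ n, 1 ≤ n → n ≤ m → ξ n ω = η n ω') {L U x : ℤ} {k : ℕ} (hk : k ≤ m) :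
    ω ∈ ladderB ξ L U x k ↔ ω' ∈ ladderB η L U x k := by
  rw [mem_ladderB_iff, mem_ladderB_iff, ladderTau_congr h hk,
    ladderS_congr h (le_trans (ladderTau_le η L U x k ω') hk)]

end Congr

def lbval (b : Bool) : ℤ := bif b then 1 else -1

def ladderW (p : ℝ) (b : Bool) : ℝ≥0∞ := bif b then ENNReal.ofReal p else 1 - ENNReal.ofReal p

lemma ladderLk_ge3 (ξ : ℕ → Ω → ℤ) (hval : ∀ n ω, ξ n ω = 1 ∨ ξ n ω = -1)
    {k : ℕ} (hk : 2 ≤ k) (ω : Ω) :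
    3 ≤ ladderLk ξ k ω ↔ (ξ 1 ω = 1 ∧ ξ 2 ω = 1) := by
  rw [ladderLk]
  split
  · next h =>
    have hmem : sInf {l | 1 ≤ l ∧ l ≤ k ∧ ξ l ω = -1} ∈ {l | 1 ≤ l ∧ l ≤ k ∧ ξ l ω = -1} :=
      Nat.sInf_mem (s := {l | 1 ≤ l ∧ l ≤ k ∧ ξ l ω = -1}) h
    obtain ⟨hm1, hm2, hm3⟩ := hmem
    constructor
    · intro h3
      constructor
      · rcases hval 1 ω with h1 | h1
        · exact h1
        · have hle : sInf {l | 1 ≤ l ∧ l ≤ k ∧ ξ l ω = -1} ≤ 1 :=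
            Nat.sInf_le (show 1 ∈ {l | 1 ≤ l ∧ l ≤ k ∧ ξ l ω = -1} from ⟨le_rfl, by omega, h1⟩)
          omega
      · rcases hval 2 ω with h1 | h1
        · exact h1
        · have hle : sInf {l | 1 ≤ l ∧ l ≤ k ∧ ξ l ω = -1} ≤ 2 :=
            Nat.sInf_le (show 2 ∈ {l | 1 ≤ l ∧ l ≤ k ∧ ξ l ω = -1} from ⟨by omega, by omega, h1⟩)
          omega
    · rintro ⟨h1, h2⟩
      by_contra h3
      have hor : sInf {l | 1 ≤ l ∧ l ≤ k ∧ ξ l ω = -1} = 1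
          ∨ sInf {l | 1 ≤ l ∧ l ≤ k ∧ ξ l ω = -1} = 2 := by omega
      rcases hor with h | h <;> rw [h] at hm3
      · rw [h1] at hm3; omega
      · rw [h2] at hm3; omega
  · next h =>
    constructor
    · intro _
      constructor
      · rcases hval 1 ω with h1 | h1
        · exact h1
        · exact absurd ⟨1, le_rfl, by omega, h1⟩ h
      · rcases hval 2 ω with h1 | h1
        · exact h1
        · exact absurd ⟨2, by omega, by omega, h1⟩ h
    · intro _; omega

lemma ladder_single (P : Measure Ω) [IsProbabilityMeasure P] (ξ : ℕ → Ω → ℤ)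
    (hmeas : ∀ n, Measurable (ξ n))
    (hval : ∀ n ω, ξ n ω = 1 ∨ ξ n ω = -1)
    (p : ℝ) (hprob : ∀ n, 1 ≤ n → P {ω | ξ n ω = 1} = ENNReal.ofReal p)
    {n : ℕ} (hn : 1 ≤ n) (b : Bool) :
    P {ω | ξ n ω = lbval b} = ladderW p b := by
  have hms : MeasurableSet {ω | ξ n ω = 1} := hmeas n (measurableSet_singleton 1)
  cases b
  · have hset : {ω | ξ n ω = lbval false} = {ω | ξ n ω = 1}ᶜ := by
      ext ω
      simp only [Set.mem_compl_iff, Set.mem_setOf_eq, lbval]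
      rcases hval n ω with h | h <;> simp [h]
    rw [hset, prob_compl_eq_one_sub hms, hprob n hn]
    rfl
  · rw [show {ω | ξ n ω = lbval true} = {ω | ξ n ω = 1} from rfl, hprob n hn]
    rfl

lemma ladder_atom (P : Measure Ω) [IsProbabilityMeasure P] (ξ : ℕ → Ω → ℤ)
    (hmeas : ∀ n, Measurable (ξ n))
    (hindep : iIndepFun ξ P)
    (hval : ∀ n ω, ξ n ω = 1 ∨ ξ n ω = -1)
    (p : ℝ) (hprob : ∀ n, 1 ≤ n → P {ω | ξ n ω = 1} = ENNReal.ofReal p)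
    (j m : ℕ) (hj : 1 ≤ j) (ε : Fin m → Bool) :
    P (⋂ i : Fin m, {ω | ξ (j + i) ω = lbval (ε i)}) = ∏ i : Fin m, ladderW p (ε i) := by
  classical
  set ε' : ℕ → Bool := fun n => if h : n - j < m then ε ⟨n - j, h⟩ else true with hε'
  have he : ∀ i : Fin m, ε' (j + i) = ε i := by
    intro i
    have h1 : j + i - j = (i : ℕ) := by omega
    simp only [hε', h1, i.isLt, dif_pos, Fin.eta]
  set S : Finset ℕ := (Finset.range m).map ⟨fun i => j + i, add_right_injective j⟩ with hS
  have key := hindep.measure_inter_preimage_eq_mul (sets := fun n => {lbval (ε' n)}) S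
    (fun n _ => measurableSet_singleton _)
  have hset : (⋂ n ∈ S, ξ n ⁻¹' {lbval (ε' n)}) = ⋂ i : Fin m, {ω | ξ (j + i) ω = lbval (ε i)} := by
    ext ω
    simp only [Set.mem_iInter, hS, Finset.mem_map, Finset.mem_range,
      Function.Embedding.coeFn_mk, Set.mem_preimage, Set.mem_singleton_iff, Set.mem_setOf_eq]
    constructor
    · intro h i
      have := h (j + i) ⟨i, i.isLt, rfl⟩
      rwa [he i] at this
    · intro h n hn
      obtain ⟨i, him, rfl⟩ := hn
      have := h ⟨i, him⟩
      rwa [← he ⟨i, him⟩] at this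
  rw [← hset, key, hS, Finset.prod_map]
  simp only [Function.Embedding.coeFn_mk]
  rw [← Fin.prod_univ_eq_prod_range (fun i => P (ξ (j + i) ⁻¹' {lbval (ε' (j + i))})) m]
  refine Finset.prod_congr rfl fun i _ => ?_
  rw [he i]
  exact ladder_single P ξ hmeas hval p hprob (by omega) _

lemma ladder_window (P : Measure Ω) [IsProbabilityMeasure P] (ξ : ℕ → Ω → ℤ)
    (hmeas : ∀ n, Measurable (ξ n))
    (hindep : iIndepFun ξ P)
    (hval : ∀ n ω, ξ n ω = 1 ∨ ξ n ω = -1)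
    (p : ℝ) (hprob : ∀ n, 1 ≤ n → P {ω | ξ n ω = 1} = ENNReal.ofReal p)
    (j m : ℕ) (hj : 1 ≤ j) (g : (Fin m → Bool) → Prop) :
    P {ω | g (fun i => decide (ξ (j + i) ω = 1))}
      = ∑ ε : Fin m → Bool, if g ε then ∏ i : Fin m, ladderW p (ε i) else 0 := by
  classical
  have henc : ∀ (ω : Ω) (ε : Fin m → Bool),
      ((fun i : Fin m => decide (ξ (j + i) ω = 1)) = ε) ↔ ∀ i : Fin m, ξ (j + i) ω = lbval (ε i) := by
    intro ω ε
    rw [funext_iff]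
    refine forall_congr' fun i => ?_
    rcases hval (j + i) ω with h | h <;> cases hε : ε i <;> simp [h, lbval]
  have hsetEq : {ω | g (fun i => decide (ξ (j + i) ω = 1))}
      = ⋃ ε ∈ Finset.univ.filter (fun ε : Fin m → Bool => g ε),
          ⋂ i : Fin m, {ω | ξ (j + i) ω = lbval (ε i)} := by
    ext ω
    simp only [Set.mem_setOf_eq, Set.mem_iUnion, Finset.mem_filter, Finset.mem_univ, true_and,
      Set.mem_iInter, exists_prop]
    constructor
    · intro h
      exact ⟨fun i : Fin m => decide (ξ (j + i) ω = 1), h, fun i => ((henc ω _).1 rfl) i⟩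
    · rintro ⟨ε, hg, h⟩
      have : (fun i : Fin m => decide (ξ (j + i) ω = 1)) = ε := (henc ω ε).2 h
      rwa [this]
  have hdisj : (↑(Finset.univ.filter (fun ε : Fin m → Bool => g ε)) : Set (Fin m → Bool)).PairwiseDisjoint
      (fun ε => ⋂ i : Fin m, {ω | ξ (j + i) ω = lbval (ε i)}) := by
    intro ε _ ε' _ hne
    refine Set.disjoint_left.mpr fun ω h1 h2 => hne ?_
    rw [Set.mem_iInter] at h1 h2
    have e1 : (fun i : Fin m => decide (ξ (j + i) ω = 1)) = ε := (henc ω ε).2 fun i => h1 i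
    have e2 : (fun i : Fin m => decide (ξ (j + i) ω = 1)) = ε' := (henc ω ε').2 fun i => h2 i
    rw [← e1, e2]
  have hms : ∀ ε ∈ Finset.univ.filter (fun ε : Fin m → Bool => g ε),
      MeasurableSet (⋂ i : Fin m, {ω | ξ (j + i) ω = lbval (ε i)}) :=
    fun ε _ => MeasurableSet.iInter fun i => hmeas (j + i) (measurableSet_singleton _)
  rw [hsetEq, measure_biUnion_finset hdisj hms]
  rw [Finset.sum_congr rfl (fun ε _ => ladder_atom P ξ hmeas hindep hval p hprob j m hj ε)]
  exact Finset.sum_filter _ _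

lemma ladder_sum_split (p : ℝ) (m : ℕ) (g : (Fin m → Bool) → Prop) :
    (∑ ε : Fin (m + 1) → Bool, if (ε 0 = true ∧ g (fun i => ε i.succ))
        then ∏ i : Fin (m + 1), ladderW p (ε i) else 0)
      = ladderW p true * ∑ δ : Fin m → Bool, if g δ then ∏ i : Fin m, ladderW p (δ i) else 0 := by
  classical
  rw [← Equiv.sum_comp (Fin.consEquiv (fun _ : Fin (m + 1) => Bool))
    (fun ε => if (ε 0 = true ∧ g (fun i => ε i.succ)) then ∏ i : Fin (m + 1), ladderW p (ε i) else 0)]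
  rw [Fintype.sum_prod_type]
  have hterm : ∀ (b : Bool) (δ : Fin m → Bool),
      (fun ε : Fin (m + 1) → Bool => if (ε 0 = true ∧ g (fun i => ε i.succ))
        then ∏ i : Fin (m + 1), ladderW p (ε i) else 0) (Fin.consEquiv _ (b, δ))
      = if (b = true ∧ g δ) then ladderW p b * ∏ i : Fin m, ladderW p (δ i) else 0 := by
    intro b δ
    simp only [Fin.consEquiv_apply, Fin.cons_zero, Fin.cons_succ, Fin.prod_univ_succ]
  simp only [hterm]
  rw [Fintype.sum_bool]
  simp only [Bool.false_eq_true, false_and, if_false, Finset.sum_const_zero, add_zero, true_and]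
  rw [Finset.mul_sum]
  exact Finset.sum_congr rfl fun δ _ => by rw [mul_ite, mul_zero]

/-- The deterministic reflection: on `{ξ₁ = ξ₂ = 1}`, the event `B_{m+1}^x` for `ξ`
coincides with `B_m^{x+2}` for the shifted driving sequence. -/
lemma ladder_path {ξ : ℕ → Ω → ℤ} {ω : Ω} (hξ1 : ξ 1 ω = 1) (hξ2 : ξ 2 ω = 1)
    {L U x : ℤ} (hLU : U - L ≥ 4) (hx1 : L + 1 ≤ x) (hx2 : x ≤ U - 3)
    {m : ℕ} (hm : 2 ≤ m) :
    ω ∈ ladderB ξ L U x (m + 1) ↔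
      ω ∈ ladderB (fun n ω => ξ (n + 1) ω) L U (x + 2) m := by
  set ξ' : ℕ → Ω → ℤ := fun n ω => ξ (n + 1) ω with hξ'
  have hS1 : ladderS ξ 1 ω = 1 := by
    simp [ladderS, ladderX, hξ1]
  have hS2 : ladderS ξ 2 ω = 3 := by
    have h2 : ladderX ξ 2 ω = 2 := by
      norm_num [ladderX, hξ1, hξ2]
    have := ladderS_succ ξ 1 ω
    rw [show (1:ℕ)+1 = 2 from rfl] at this
    omega
  have hshift : ∀ l, 1 ≤ l → ladderS ξ' l ω = ladderS ξ (l + 1) ω - 2 := by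
    intro l hl
    induction l with
    | zero => omega
    | succ n ih =>
      rcases Nat.eq_or_lt_of_le hl with h1 | h1
      · -- n + 1 = 1
        have hn : n = 0 := by omega
        subst hn
        have : ladderS ξ' 1 ω = 1 := by
          simp [ladderS, ladderX, hξ', hξ2]
        rw [this, show (1:ℕ)+1 = 2 from rfl, hS2]
        norm_num
      · have hn : 1 ≤ n := by omega
        have hX : ladderX ξ' (n + 1) ω = ladderX ξ (n + 2) ω := by
          have e1 : ξ' (n + 1) ω = ξ (n + 2) ω := rfl
          have e2 : ξ' (n + 1 - 1) ω = ξ (n + 2 - 1) ω := by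
            simp [hξ']
          rw [ladderX, ladderX, if_neg (show ¬(n + 1 = 1) by omega),
            if_neg (show ¬(n + 2 = 1) by omega), e1, e2]
        rw [ladderS_succ, ih hn, hX, show n + 1 + 1 = n + 2 from rfl,
          ladderS_succ ξ (n + 1) ω]
        ring
  -- positions
  have hpos : ∀ l, 1 ≤ l → x + 2 + ladderS ξ' l ω = x + ladderS ξ (l + 1) ω := by
    intro l hl; rw [hshift l hl]; ring
  have hc0 : ¬(x + ladderS ξ 0 ω ≤ L ∨ U ≤ x + ladderS ξ 0 ω) := by
    rw [ladderS_zero]; omega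
  have hc1 : ¬(x + ladderS ξ 1 ω ≤ L ∨ U ≤ x + ladderS ξ 1 ω) := by
    rw [hS1]; omega
  have hc0' : ¬(x + 2 + ladderS ξ' 0 ω ≤ L ∨ U ≤ x + 2 + ladderS ξ' 0 ω) := by
    rw [ladderS_zero]; omega
  set T1 : Set ℕ := {l | l ≤ m + 1 ∧ (x + ladderS ξ l ω ≤ L ∨ U ≤ x + ladderS ξ l ω)} with hT1
  set T2 : Set ℕ := {l | l ≤ m ∧ (x + 2 + ladderS ξ' l ω ≤ L ∨ U ≤ x + 2 + ladderS ξ' l ω)} with hT2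
  have hmemT1 : ∀ l, l ∈ T1 ↔ ∃ j, j ∈ T2 ∧ l = j + 1 := by
    intro l
    constructor
    · rintro ⟨hl, hc⟩
      have hl2 : 2 ≤ l := by
        by_contra h
        interval_cases l
        · exact hc0 hc
        · exact hc1 hc
      refine ⟨l - 1, ⟨by omega, ?_⟩, by omega⟩
      rw [hpos (l - 1) (by omega), show l - 1 + 1 = l by omega]
      exact hc
    · rintro ⟨j, ⟨hj, hc⟩, rfl⟩
      have hj1 : 1 ≤ j := by
        rcases Nat.eq_zero_or_pos j with rfl | h
        · exact absurd hc hc0'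
        · exact h
      exact ⟨by omega, by rw [← hpos j hj1]; exact hc⟩
  have hne : (∃ l ≤ m + 1, (x + ladderS ξ l ω ≤ L ∨ U ≤ x + ladderS ξ l ω))
      ↔ (∃ l ≤ m, (x + 2 + ladderS ξ' l ω ≤ L ∨ U ≤ x + 2 + ladderS ξ' l ω)) := by
    constructor
    · rintro ⟨l, hl, hc⟩
      obtain ⟨j, hj, rfl⟩ := (hmemT1 l).1 ⟨hl, hc⟩
      exact ⟨j, hj.1, hj.2⟩
    · rintro ⟨j, hj, hc⟩
      obtain ⟨hl, hc'⟩ := (hmemT1 (j + 1)).2 ⟨j, ⟨hj, hc⟩, rfl⟩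
      exact ⟨j + 1, hl, hc'⟩
  rw [mem_ladderB_iff, mem_ladderB_iff, ladderTau, ladderTau]
  by_cases hex : ∃ l ≤ m + 1, (x + ladderS ξ l ω ≤ L ∨ U ≤ x + ladderS ξ l ω)
  · have hex' := hne.1 hex
    rw [if_pos hex, if_pos hex']
    have hT2ne : T2.Nonempty := by
      obtain ⟨l, hl, hc⟩ := hex'
      exact ⟨l, hl, hc⟩
    have hT1ne : T1.Nonempty := by
      obtain ⟨l, hl, hc⟩ := hex
      exact ⟨l, hl, hc⟩
    have h2mem : sInf T2 ∈ T2 := Nat.sInf_mem hT2ne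
    have h1mem : sInf T1 ∈ T1 := Nat.sInf_mem hT1ne
    have hinf : sInf T1 = sInf T2 + 1 := by
      have hle : sInf T1 ≤ sInf T2 + 1 :=
        Nat.sInf_le ((hmemT1 (sInf T2 + 1)).2 ⟨sInf T2, h2mem, rfl⟩)
      have hge : sInf T2 + 1 ≤ sInf T1 := by
        obtain ⟨j, hj, hEq⟩ := (hmemT1 (sInf T1)).1 h1mem
        have := Nat.sInf_le hj
        omega
      omega
    rw [← hT1, ← hT2, hinf]
    have hj1 : 1 ≤ sInf T2 := by
      rcases Nat.eq_zero_or_pos (sInf T2) with h | h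
      · rw [h] at h2mem; exact absurd h2mem.2 hc0'
      · exact h
    rw [hpos (sInf T2) hj1]
  · have hex' : ¬∃ l ≤ m, (x + 2 + ladderS ξ' l ω ≤ L ∨ U ≤ x + 2 + ladderS ξ' l ω) :=
      fun h => hex (hne.2 h)
    rw [if_neg hex, if_neg hex']
    constructor
    · intro h
      exact absurd ⟨m + 1, le_rfl, Or.inr h⟩ hex
    · intro h
      exact absurd ⟨m, le_rfl, Or.inr h⟩ hex'


lemma ite_inst_congr {c d : Prop} (h : c ↔ d) {i1 : Decidable c} {i2 : Decidable d}
    (t e : ℝ≥0∞) : (@ite _ c i1 t e) = (@ite _ d i2 t e) := by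
  rcases i1 with h1 | h1 <;> rcases i2 with h2 | h2
  · rfl
  · exact absurd (h.2 h2) h1
  · exact absurd (h.1 h1) h2
  · rfl


/-- reflection principle for ladder chains. For `k ≥ 3`
and `L + 1 ≤ x ≤ U - 3`, `P(B_k^x | L_k ≥ 3) = P(B_(k-1)^(x+2) | ξ₁ = 1)`. -/
theorem ladder_reflection_principle (p : ℝ) (hp0 : 0 < p) (hp1 : p < 1)
    (P : Measure Ω) [IsProbabilityMeasure P]
    (ξ : ℕ → Ω → ℤ) (hmeas : ∀ n, Measurable (ξ n))
    (hindep : iIndepFun ξ P)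
    (hval : ∀ n ω, ξ n ω = 1 ∨ ξ n ω = -1)
    (hprob : ∀ n, 1 ≤ n → P {ω | ξ n ω = 1} = ENNReal.ofReal p)
    (L U : ℤ) (hLU : U - L ≥ 4) (k : ℕ) (hk : 3 ≤ k)
    (x : ℤ) (hx1 : L + 1 ≤ x) (hx2 : x ≤ U - 3) :
    P[|{ω | 3 ≤ ladderLk ξ k ω}] (ladderB ξ L U x k)
      = P[|{ω | ξ 1 ω = 1}] (ladderB ξ L U (x + 2) (k - 1)) := by
  classical
  obtain ⟨m, rfl⟩ : ∃ m, k = m + 1 := ⟨k - 1, by omega⟩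
  have hm : 2 ≤ m := by omega
  simp only [Nat.add_sub_cancel]
  have hval' : ∀ (a : ℕ) (ω : Ω), lbval (decide (ξ a ω = 1)) = ξ a ω := by
    intro a ω; rcases hval a ω with h | h <;> simp [h, lbval]
  -- conditioning event
  have hC : {ω | 3 ≤ ladderLk ξ (m + 1) ω} = {ω | ξ 1 ω = 1 ∧ ξ 2 ω = 1} := by
    ext ω
    rw [Set.mem_setOf_eq, ladderLk_ge3 ξ hval (by omega) ω]
    rfl
  rw [hC]
  have hms1 : MeasurableSet {ω | ξ 1 ω = 1} := hmeas 1 (measurableSet_singleton 1)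
  have hmsC : MeasurableSet {ω | ξ 1 ω = 1 ∧ ξ 2 ω = 1} := by
    have h2 : {ω | ξ 1 ω = 1 ∧ ξ 2 ω = 1} = {ω | ξ 1 ω = 1} ∩ {ω | ξ 2 ω = 1} := rfl
    rw [h2]
    exact hms1.inter (hmeas 2 (measurableSet_singleton 1))
  rw [cond_apply hmsC, cond_apply hms1]
  set a : ℝ≥0∞ := ENNReal.ofReal p with ha
  -- deterministic encoding
  set lseq : (Fin m → Bool) → ℕ → ℤ :=
    fun ε n => if h : 1 ≤ n ∧ n ≤ m then lbval (ε ⟨n - 1, by omega⟩) else 1 with hlseq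
  set g : (Fin m → Bool) → Prop := fun ε => ε ⟨0, by omega⟩ = true ∧
      () ∈ ladderB (fun n (_ : Unit) => lseq ε n) L U (x + 2) m with hg
  -- the shifted walk’s event is the canonical event of the window ξ 2, …, ξ (m+1)
  have hlseq_eval : ∀ (ε : Fin m → Bool) (n : ℕ) (h1 : 1 ≤ n) (h2 : n ≤ m),
      lseq ε n = lbval (ε ⟨n - 1, by omega⟩) := by
    intro ε n h1 h2
    simp only [hlseq]
    exact dif_pos ⟨h1, h2⟩
  have hshiftB : ∀ ω : Ω, (ω ∈ ladderB (fun n ω => ξ (n + 1) ω) L U (x + 2) m ↔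
      () ∈ ladderB (fun n (_ : Unit) =>
        lseq (fun i : Fin m => decide (ξ (2 + ↑i) ω = 1)) n) L U (x + 2) m) := by
    intro ω
    refine ladderB_congr (m := m) ?_ le_rfl
    intro n h1 h2
    have hev := hlseq_eval (fun i : Fin m => decide (ξ (2 + ↑i) ω = 1)) n h1 h2
    show ξ (n + 1) ω = lseq (fun i : Fin m => decide (ξ (2 + ↑i) ω = 1)) n
    rw [hev]
    show ξ (n + 1) ω = lbval (decide (ξ (2 + (n - 1)) ω = 1))
    rw [show 2 + (n - 1) = n + 1 by omega, hval']
  -- the unshifted walk’s event is the canonical event of the window ξ 1, …, ξ m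
  have hplainB : ∀ ω : Ω, (ω ∈ ladderB ξ L U (x + 2) m ↔
      () ∈ ladderB (fun n (_ : Unit) =>
        lseq (fun i : Fin m => decide (ξ (1 + ↑i) ω = 1)) n) L U (x + 2) m) := by
    intro ω
    refine ladderB_congr (m := m) ?_ le_rfl
    intro n h1 h2
    have hev := hlseq_eval (fun i : Fin m => decide (ξ (1 + ↑i) ω = 1)) n h1 h2
    show ξ n ω = lseq (fun i : Fin m => decide (ξ (1 + ↑i) ω = 1)) n
    rw [hev]
    show ξ n ω = lbval (decide (ξ (1 + (n - 1)) ω = 1))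
    rw [show 1 + (n - 1) = n by omega, hval']
  -- event identity for the right-hand side numerator
  have hF : {ω | ξ 1 ω = 1} ∩ ladderB ξ L U (x + 2) m
      = {ω | g (fun i : Fin m => decide (ξ (1 + ↑i) ω = 1))} := by
    ext ω
    simp only [Set.mem_inter_iff, Set.mem_setOf_eq, hg]
    constructor
    · rintro ⟨h1, hB⟩
      refine ⟨?_, (hplainB ω).1 hB⟩
      simp [h1]
    · rintro ⟨h1, hB⟩
      refine ⟨?_, (hplainB ω).2 hB⟩
      have : decide (ξ (1 + ((⟨0, by omega⟩ : Fin m) : ℕ)) ω = 1) = true := h1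
      simpa using this
  set G : (Fin (m + 1) → Bool) → Prop :=
    fun ε => ε 0 = true ∧ g (fun i => ε i.succ) with hG
  -- event identity for the left-hand side numerator
  have hCB : {ω | ξ 1 ω = 1 ∧ ξ 2 ω = 1} ∩ ladderB ξ L U x (m + 1)
      = {ω | G (fun i : Fin (m + 1) => decide (ξ (1 + ↑i) ω = 1))} := by
    ext ω
    simp only [Set.mem_inter_iff, Set.mem_setOf_eq, hG, hg]
    have harg : ∀ i : Fin m, (1 + ((i.succ : Fin (m + 1)) : ℕ)) = 2 + (i : ℕ) := by
      intro i
      simp only [Fin.val_succ]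
      omega
    constructor
    · rintro ⟨⟨h1, h2⟩, hB⟩
      have hB2 := (hshiftB ω).1 ((ladder_path h1 h2 hLU hx1 hx2 hm).1 hB)
      refine ⟨by simp [h1], ?_, ?_⟩
      · have : decide (ξ (1 + (((⟨0, by omega⟩ : Fin m).succ : Fin (m + 1)) : ℕ)) ω = 1)
            = true := by
          rw [harg ⟨0, by omega⟩]
          simp [h2]
        exact this
      · have hAB : (fun i : Fin m => decide (ξ (1 + ((i.succ : Fin (m + 1)) : ℕ)) ω = 1))
            = (fun i : Fin m => decide (ξ (2 + (i : ℕ)) ω = 1)) := by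
          funext i
          rw [harg i]
        rw [hAB]
        exact hB2
    · rintro ⟨h0, h1', hB⟩
      have h1 : ξ 1 ω = 1 := by
        have : decide (ξ (1 + ((0 : Fin (m + 1)) : ℕ)) ω = 1) = true := h0
        simpa using this
      have h2 : ξ 2 ω = 1 := by
        have := h1'
        rw [show ((⟨0, by omega⟩ : Fin m).succ : Fin (m+1)) = (⟨1, by omega⟩ : Fin (m+1))
          from rfl] at this
        have h' : decide (ξ (1 + ((⟨1, by omega⟩ : Fin (m + 1)) : ℕ)) ω = 1) = true := this
        simpa using h'
      refine ⟨⟨h1, h2⟩, ?_⟩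
      have hAB : (fun i : Fin m => decide (ξ (1 + ((i.succ : Fin (m + 1)) : ℕ)) ω = 1))
          = (fun i : Fin m => decide (ξ (2 + (i : ℕ)) ω = 1)) := by
        funext i
        rw [harg i]
      rw [hAB] at hB
      exact (ladder_path h1 h2 hLU hx1 hx2 hm).2 ((hshiftB ω).2 hB)
  -- probability computations
  set N : ℝ≥0∞ := P ({ω | ξ 1 ω = 1} ∩ ladderB ξ L U (x + 2) m) with hN
  have hPCB : P ({ω | ξ 1 ω = 1 ∧ ξ 2 ω = 1} ∩ ladderB ξ L U x (m + 1)) = a * N := by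
    have bridge1 : P {ω | G (fun i : Fin (m + 1) => decide (ξ (1 + ↑i) ω = 1))}
        = ∑ ε : Fin (m + 1) → Bool, if (ε 0 = true ∧ g (fun i => ε i.succ))
            then ∏ i : Fin (m + 1), ladderW p (ε i) else 0 :=
      (ladder_window P ξ hmeas hindep hval p hprob 1 (m + 1) le_rfl G).trans
        (Finset.sum_congr rfl fun ε _ => ite_inst_congr Iff.rfl _ _)
    have bridge2 : (∑ ε : Fin (m + 1) → Bool, if (ε 0 = true ∧ g (fun i => ε i.succ))
            then ∏ i : Fin (m + 1), ladderW p (ε i) else 0)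
        = ladderW p true * P {ω | g (fun i : Fin m => decide (ξ (1 + ↑i) ω = 1))} :=
      ((Finset.sum_congr rfl fun ε _ => ite_inst_congr Iff.rfl _ _).trans
        (ladder_sum_split p m g)).trans
        (congrArg (ladderW p true * ·)
          (((Finset.sum_congr rfl fun δ _ => ite_inst_congr Iff.rfl _ _).trans
            (ladder_window P ξ hmeas hindep hval p hprob 1 m le_rfl g).symm)))
    rw [hCB, bridge1, bridge2, ← hF, ← hN]
    rfl
  have hPF : P ({ω | ξ 1 ω = 1} ∩ ladderB ξ L U (x + 2) m) = N := hN.symm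
  have hPC : P {ω | ξ 1 ω = 1 ∧ ξ 2 ω = 1} = a * a := by
    have hset : {ω | ξ 1 ω = 1 ∧ ξ 2 ω = 1}
        = ⋂ i : Fin 2, {ω | ξ (1 + ↑i) ω = lbval true} := by
      ext ω
      simp only [Set.mem_setOf_eq, Set.mem_iInter, Fin.forall_fin_two]
      show _ ↔ (ξ (1 + ((0 : Fin 2) : ℕ)) ω = lbval true ∧ ξ (1 + ((1 : Fin 2) : ℕ)) ω = lbval true)
      norm_num [lbval]
    rw [hset, ladder_atom P ξ hmeas hindep hval p hprob 1 2 le_rfl (fun _ => true),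
      Fin.prod_univ_two]
    rfl
  rw [hPCB, hPC, hprob 1 le_rfl]
  have ha0 : a ≠ 0 := by
    rw [ha]
    simp [ENNReal.ofReal_pos.mpr hp0, ne_of_gt]
  have haT : a ≠ ⊤ := ENNReal.ofReal_ne_top
  rw [ENNReal.mul_inv (Or.inl ha0) (Or.inl haT)]
  have hcalc : a⁻¹ * a⁻¹ * (a * N) = a⁻¹ * ((a⁻¹ * a) * N) := by ring
  rw [hcalc, ENNReal.inv_mul_cancel ha0 haT, one_mul]

end
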